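/- The risk of the projection estimator admits the decomposition E[‖s − ŝ‖²_η] = ‖s − s^⊥‖²_η + E[χ²], and moreover E[χ²] ≤ ‖s‖_∞ · d / T, where ‖s‖_∞ is the (essential) supremum of s on D. -/

import Mathlib

open MeasureTheory ProbabilityTheory Set Filter

noncomputable section

/-- `N` is a Poisson random measure on `V` with mean measure `μ`, on the probability
space `(Ω, P)`: for every measurable set `A` of finite mean measure, `N · A` is
Poisson distributed with mean `μ A`, and the values on pairwise disjoint sets are
independent. -/
def IsPoissonRandomMeasure {Ω V : Type*} [MeasurableSpace Ω] [MeasurableSpace V]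
    (P : Measure Ω) (N : Ω → Measure V) (μ : Measure V) : Prop :=
  (∀ A : Set V, MeasurableSet A → Measurable fun ω => N ω A) ∧
  (∀ A : Set V, MeasurableSet A → μ A < ⊤ → ∀ k : ℕ,
      P {ω | N ω A = k} = ENNReal.ofReal (poissonPMFReal (μ A).toNNReal k)) ∧
  (∀ (n : ℕ) (A : Fin n → Set V), (∀ i, MeasurableSet (A i)) →
      (Pairwise fun i j => Disjoint (A i) (A j)) →
      iIndepFun (fun i ω => N ω (A i)) P)

/-- The mean measure `μ(dt,dx) = s(x) dt η(dx)` on `[0,T] × D`. -/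
def levyMeanMeasure (T : ℝ) (D : Set ℝ) (η : Measure ℝ) (s : ℝ → ℝ) : Measure (ℝ × ℝ) :=
  (volume.restrict (Icc 0 T)).prod ((η.restrict D).withDensity fun x => ENNReal.ofReal (s x))


open Real Topology
open scoped NNReal ENNReal

section Auxiliary

lemma pois_shift1 (r : ℝ≥0) (n : ℕ) :
    ((n+1 : ℕ) : ℝ) * poissonPMFReal r (n+1) = r * poissonPMFReal r n := by
  unfold poissonPMFReal
  rw [Nat.factorial_succ]
  push_cast
  have h : ((n:ℝ)+1) ≠ 0 := by positivity
  field_simp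
  ring

lemma pois_hasSum_mean (r : ℝ≥0) :
    HasSum (fun k : ℕ => (k : ℝ) * poissonPMFReal r k) r := by
  have base : HasSum (fun n => poissonPMFReal r n) 1 := poissonPMFRealSum r
  have h1 : HasSum (fun n : ℕ => ((n+1 : ℕ) : ℝ) * poissonPMFReal r (n+1)) r := by
    rw [show (fun n : ℕ => ((n+1 : ℕ) : ℝ) * poissonPMFReal r (n+1))
        = fun n : ℕ => (r:ℝ) * poissonPMFReal r n from funext (pois_shift1 r)]
    simpa using base.mul_left (r : ℝ)
  have := (hasSum_nat_add_iff (f := fun k : ℕ => (k : ℝ) * poissonPMFReal r k) 1).mp h1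
  simpa using this

lemma pois_shift2 (r : ℝ≥0) (n : ℕ) :
    ((n+2 : ℕ) : ℝ) * (((n+2 : ℕ) : ℝ) - 1) * poissonPMFReal r (n+2)
      = (r:ℝ)^2 * poissonPMFReal r n := by
  unfold poissonPMFReal
  rw [Nat.factorial_succ, Nat.factorial_succ]
  push_cast
  have h1 : ((n:ℝ)+1) ≠ 0 := by positivity
  have h2 : ((n:ℝ)+2) ≠ 0 := by positivity
  field_simp
  ring

lemma pois_hasSum_sq (r : ℝ≥0) :
    HasSum (fun k : ℕ => (k : ℝ)^2 * poissonPMFReal r k) ((r:ℝ) + (r:ℝ)^2) := by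
  have base : HasSum (fun n => poissonPMFReal r n) 1 := poissonPMFRealSum r
  have h2 : HasSum (fun k : ℕ => (k : ℝ) * ((k:ℝ) - 1) * poissonPMFReal r k) ((r:ℝ)^2) := by
    have hs : HasSum (fun n : ℕ => ((n+2 : ℕ) : ℝ) * (((n+2 : ℕ) : ℝ) - 1) * poissonPMFReal r (n+2))
        ((r:ℝ)^2) := by
      rw [show (fun n : ℕ => ((n+2 : ℕ) : ℝ) * (((n+2 : ℕ) : ℝ) - 1) * poissonPMFReal r (n+2))
          = fun n : ℕ => (r:ℝ)^2 * poissonPMFReal r n from funext (pois_shift2 r)]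
      simpa using base.mul_left ((r:ℝ)^2)
    have := (hasSum_nat_add_iff
      (f := fun k : ℕ => (k : ℝ) * ((k:ℝ)-1) * poissonPMFReal r k) 2).mp hs
    simpa [Finset.sum_range_succ] using this
  have hadd := h2.add (pois_hasSum_mean r)
  rw [show (fun k : ℕ => (k : ℝ)^2 * poissonPMFReal r k)
      = fun k : ℕ => ((k : ℝ) * ((k:ℝ)-1) * poissonPMFReal r k + (k:ℝ) * poissonPMFReal r k) from
      funext fun k => by ring]
  rw [add_comm ((r:ℝ)) ((r:ℝ)^2)]
  exact hadd
variable {Ω : Type*} [MeasurableSpace Ω] {P : Measure Ω} [IsProbabilityMeasure P]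

lemma pois_tsum_one (r : ℝ≥0) :
    ∑' k : ℕ, ENNReal.ofReal (poissonPMFReal r k) = 1 := by
  rw [← ENNReal.ofReal_tsum_of_nonneg (fun k => poissonPMFReal_nonneg)
    (poissonPMFRealSum r).summable, (show HasSum (fun n => poissonPMFReal r n) 1 from poissonPMFRealSum r).tsum_eq, ENNReal.ofReal_one]

lemma pois_ae_nat (X : Ω → ℝ≥0∞) (hX : Measurable X) (r : ℝ≥0)
    (hd : ∀ k : ℕ, P {ω | X ω = k} = ENNReal.ofReal (poissonPMFReal r k)) :
    ∀ᵐ ω ∂P, ∃ k : ℕ, X ω = k := by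
  have hS : ∀ k : ℕ, MeasurableSet {ω | X ω = (k : ℝ≥0∞)} := fun k =>
    hX (measurableSet_singleton _)
  have hdisj : Pairwise (Function.onFun Disjoint fun k : ℕ => {ω | X ω = (k : ℝ≥0∞)}) := by
    intro i j hij
    refine Set.disjoint_left.mpr fun ω hi hj => hij ?_
    exact Nat.cast_injective (hi.symm.trans hj : (i : ℝ≥0∞) = j)
  have hU : P (⋃ k : ℕ, {ω | X ω = (k : ℝ≥0∞)}) = 1 := by
    rw [measure_iUnion hdisj hS]
    simpa [hd] using pois_tsum_one r
  have := (prob_compl_eq_zero_iff (MeasurableSet.iUnion hS)).mpr hU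
  filter_upwards [measure_eq_zero_iff_ae_notMem.mp this] with ω hω
  simpa using hω

lemma pois_lintegral_aux (X : Ω → ℝ≥0∞) (hX : Measurable X) (r : ℝ≥0)
    (hd : ∀ k : ℕ, P {ω | X ω = k} = ENNReal.ofReal (poissonPMFReal r k))
    (g : ℕ → ℝ) (hg : ∀ k, 0 ≤ g k)
    (h : Ω → ℝ≥0∞)
    (hcong : ∀ ω (k : ℕ), X ω = k → h ω = ENNReal.ofReal (g k)) :
    ∫⁻ ω, h ω ∂P = ∑' k : ℕ, ENNReal.ofReal (g k * poissonPMFReal r k) := by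
  set S : ℕ → Set Ω := fun k => {ω | X ω = (k : ℝ≥0∞)} with hSdef
  have hS : ∀ k : ℕ, MeasurableSet (S k) := fun k => hX (measurableSet_singleton _)
  have hdisj : Pairwise (Function.onFun Disjoint S) := by
    intro i j hij
    refine Set.disjoint_left.mpr fun ω hi hj => hij ?_
    exact Nat.cast_injective (hi.symm.trans hj : (i : ℝ≥0∞) = j)
  have hU : P (⋃ k, S k) = 1 := by
    rw [measure_iUnion hdisj hS]
    simpa [hSdef, hd] using pois_tsum_one r
  have hres : P.restrict (⋃ k, S k) = P := by
    apply Measure.restrict_eq_self_of_ae_mem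
    have := (prob_compl_eq_zero_iff (MeasurableSet.iUnion hS)).mpr hU
    exact measure_eq_zero_iff_ae_notMem.mp this |>.mono fun ω hω => not_not.mp hω
  calc ∫⁻ ω, h ω ∂P = ∫⁻ ω in ⋃ k, S k, h ω ∂P := by rw [hres]
    _ = ∑' k : ℕ, ∫⁻ ω in S k, h ω ∂P := lintegral_iUnion hS hdisj h
    _ = ∑' k : ℕ, ENNReal.ofReal (g k * poissonPMFReal r k) := by
        refine tsum_congr fun k => ?_
        rw [setLIntegral_congr_fun (hS k)
          (fun ω (hω : X ω = (k:ℝ≥0∞)) => hcong ω k hω),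
          setLIntegral_const, hd k, ← ENNReal.ofReal_mul (hg k)]
lemma pois_moments (X : Ω → ℝ≥0∞) (hX : Measurable X) (r : ℝ≥0)
    (hd : ∀ k : ℕ, P {ω | X ω = k} = ENNReal.ofReal (poissonPMFReal r k)) :
    MemLp (fun ω => (X ω).toReal) 2 P ∧
    ∫ ω, (X ω).toReal ∂P = r ∧
    variance (fun ω => (X ω).toReal) P = r := by
  have hmm : Measurable (fun ω => (X ω).toReal) := hX.ennreal_toReal
  have hsq : ∫⁻ ω, ENNReal.ofReal ((X ω).toReal^2) ∂P = ENNReal.ofReal ((r:ℝ) + (r:ℝ)^2) := by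
    rw [pois_lintegral_aux X hX r hd (fun k => (k:ℝ)^2) (fun k => sq_nonneg _)
      (fun ω => ENNReal.ofReal ((X ω).toReal^2))
      (fun ω k hω => by show ENNReal.ofReal _ = _; rw [hω]; simp)]
    rw [← ENNReal.ofReal_tsum_of_nonneg
      (fun k => mul_nonneg (sq_nonneg _) poissonPMFReal_nonneg) (pois_hasSum_sq r).summable,
      (pois_hasSum_sq r).tsum_eq]
  have hmean : ∫⁻ ω, ENNReal.ofReal ((X ω).toReal) ∂P = ENNReal.ofReal (r:ℝ) := by
    rw [pois_lintegral_aux X hX r hd (fun k => (k:ℝ)) (fun k => Nat.cast_nonneg _)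
      (fun ω => ENNReal.ofReal ((X ω).toReal))
      (fun ω k hω => by show ENNReal.ofReal _ = _; rw [hω]; simp)]
    rw [← ENNReal.ofReal_tsum_of_nonneg
      (fun k => mul_nonneg (Nat.cast_nonneg _) poissonPMFReal_nonneg)
      (pois_hasSum_mean r).summable, (pois_hasSum_mean r).tsum_eq]
  have hisq : Integrable (fun ω => (X ω).toReal^2) P := by
    refine ⟨((hmm.pow_const 2).aestronglyMeasurable), ?_⟩
    rw [hasFiniteIntegral_iff_ofReal (ae_of_all _ fun ω => sq_nonneg _), hsq]
    exact ENNReal.ofReal_lt_top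
  have hmem : MemLp (fun ω => (X ω).toReal) 2 P :=
    (memLp_two_iff_integrable_sq hmm.aestronglyMeasurable).mpr hisq
  have hint : ∫ ω, (X ω).toReal ∂P = r := by
    rw [integral_eq_lintegral_of_nonneg_ae (ae_of_all _ fun ω => ENNReal.toReal_nonneg)
      hmm.aestronglyMeasurable, hmean, ENNReal.toReal_ofReal r.coe_nonneg]
  have hintsq : ∫ ω, (X ω).toReal^2 ∂P = (r:ℝ) + (r:ℝ)^2 := by
    rw [integral_eq_lintegral_of_nonneg_ae (ae_of_all _ fun ω => sq_nonneg _)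
      (hmm.pow_const 2).aestronglyMeasurable, hsq,
      ENNReal.toReal_ofReal (by positivity)]
  refine ⟨hmem, hint, ?_⟩
  rw [variance_eq_sub hmem]
  simp only [Pi.pow_apply]
  rw [hintsq, hint]
  ring

lemma pois_lintegral_mean (X : Ω → ℝ≥0∞) (hX : Measurable X) (r : ℝ≥0)
    (hd : ∀ k : ℕ, P {ω | X ω = k} = ENNReal.ofReal (poissonPMFReal r k)) :
    ∫⁻ ω, X ω ∂P = r := by
  rw [pois_lintegral_aux X hX r hd (fun k => (k:ℝ)) (fun k => Nat.cast_nonneg _) X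
    (fun ω k hω => by rw [hω]; simp)]
  rw [← ENNReal.ofReal_tsum_of_nonneg
    (fun k => mul_nonneg (Nat.cast_nonneg _) poissonPMFReal_nonneg)
    (pois_hasSum_mean r).summable, (pois_hasSum_mean r).tsum_eq, ENNReal.ofReal_coe_nnreal]

section PRM

variable {V : Type*} [MeasurableSpace V] {N : Ω → Measure V} {μ : Measure V}

lemma prm_set_moments (hN : IsPoissonRandomMeasure P N μ) {A : Set V}
    (hA : MeasurableSet A) (hfin : μ A < ⊤) :
    MemLp (fun ω => (N ω A).toReal) 2 P ∧
    ∫ ω, (N ω A).toReal ∂P = (μ A).toReal ∧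
    variance (fun ω => (N ω A).toReal) P = (μ A).toReal ∧
    ∫⁻ ω, N ω A ∂P = μ A := by
  have hd := hN.2.1 A hA hfin
  have hm := hN.1 A hA
  have h1 := pois_moments (fun ω => N ω A) hm (μ A).toNNReal hd
  have h2 := pois_lintegral_mean (fun ω => N ω A) hm (μ A).toNNReal hd
  rw [ENNReal.coe_toNNReal hfin.ne] at h2
  have hc : ((μ A).toNNReal : ℝ) = (μ A).toReal := rfl
  exact ⟨h1.1, by rw [h1.2.1, hc], by rw [h1.2.2, hc], h2⟩

omit [IsProbabilityMeasure P] in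
lemma prm_measurable (hN : IsPoissonRandomMeasure P N μ) : Measurable fun ω => N ω :=
  Measure.measurable_of_measurable_coe _ hN.1

lemma prm_lintegral_set [SigmaFinite μ] (hN : IsPoissonRandomMeasure P N μ) {A : Set V}
    (hA : MeasurableSet A) : ∫⁻ ω, N ω A ∂P = μ A := by
  set T : ℕ → Set V := disjointed (spanningSets μ) with hT
  have hTm : ∀ n, MeasurableSet (T n) := MeasurableSet.disjointed (measurableSet_spanningSets μ)
  have hTd : Pairwise (Function.onFun Disjoint T) := disjoint_disjointed _
  have hTU : ⋃ n, T n = univ := by rw [hT, iUnion_disjointed, iUnion_spanningSets]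
  have hsplit : ∀ (ν : Measure V), ν A = ∑' n, ν (A ∩ T n) := by
    intro ν
    rw [← measure_iUnion (hTd.mono fun i j h => (h.inter_right' A).inter_left' A)
      (fun n => hA.inter (hTm n)), ← inter_iUnion, hTU, inter_univ]
  have hfin : ∀ n, μ (A ∩ T n) < ⊤ := fun n =>
    ((measure_mono (inter_subset_right.trans (disjointed_subset _ n))).trans_lt
      (measure_spanningSets_lt_top μ n))
  calc ∫⁻ ω, N ω A ∂P = ∫⁻ ω, ∑' n, N ω (A ∩ T n) ∂P := by
        apply lintegral_congr fun ω => hsplit (N ω)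
    _ = ∑' n, ∫⁻ ω, N ω (A ∩ T n) ∂P :=
        lintegral_tsum fun n => (hN.1 _ (hA.inter (hTm n))).aemeasurable
    _ = ∑' n, μ (A ∩ T n) := by
        exact tsum_congr fun n => (prm_set_moments hN (hA.inter (hTm n)) (hfin n)).2.2.2
    _ = μ A := (hsplit μ).symm

lemma prm_campbell_lintegral [SigmaFinite μ] (hN : IsPoissonRandomMeasure P N μ)
    {g : V → ℝ≥0∞} (hg : Measurable g) :
    ∫⁻ ω, ∫⁻ v, g v ∂(N ω) ∂P = ∫⁻ v, g v ∂μ := by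
  have hjoin : (P.map fun ω => N ω).join = μ := by
    ext A hA
    rw [Measure.join_apply hA, lintegral_map (Measure.measurable_coe hA) (prm_measurable hN),
      prm_lintegral_set hN hA]
  calc ∫⁻ ω, ∫⁻ v, g v ∂(N ω) ∂P
      = ∫⁻ ν, ∫⁻ v, g v ∂ν ∂(P.map fun ω => N ω) :=
        (lintegral_map (Measure.measurable_lintegral hg) (prm_measurable hN)).symm
    _ = ∫⁻ v, g v ∂((P.map fun ω => N ω).join) := (Measure.lintegral_join hg.aemeasurable).symm
    _ = ∫⁻ v, g v ∂μ := by rw [hjoin]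

end PRM
section PRM2

variable {V : Type*} [MeasurableSpace V] {N : Ω → Measure V} {μ : Measure V}

lemma prm_simple (hN : IsPoissonRandomMeasure P N μ) (g : SimpleFunc V ℝ)
    (hgi : Integrable g μ) (hg2 : Integrable (fun v => (g v)^2) μ) :
    MemLp (fun ω => ∑ a ∈ g.range, (N ω (g ⁻¹' {a})).toReal * a) 2 P ∧
    ∫ ω, (∑ a ∈ g.range, (N ω (g ⁻¹' {a})).toReal * a) ∂P = ∫ v, g v ∂μ ∧
    variance (fun ω => ∑ a ∈ g.range, (N ω (g ⁻¹' {a})).toReal * a) P = ∫ v, (g v)^2 ∂μ ∧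
    (∀ᵐ ω ∂P, Integrable g (N ω) ∧
      (∑ a ∈ g.range, (N ω (g ⁻¹' {a})).toReal * a) = ∫ v, g v ∂(N ω)) := by
  classical
  have hfin : ∀ a : ℝ, a ≠ 0 → μ (g ⁻¹' {a}) < ⊤ := fun a ha =>
    g.measure_preimage_lt_top_of_integrable hgi ha
  -- moments of each term
  have hterm : ∀ a ∈ g.range, MemLp (fun ω => (N ω (g ⁻¹' {a})).toReal * a) 2 P := by
    intro a _
    by_cases ha : a = 0
    · subst ha
      simpa using (memLp_const (0:ℝ) : MemLp (fun _ : Ω => (0:ℝ)) 2 P)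
    · have := (prm_set_moments hN (g.measurableSet_fiber a) (hfin a ha)).1
      simpa [mul_comm] using this.const_mul a
  have hZeq : (fun ω => ∑ a ∈ g.range, (N ω (g ⁻¹' {a})).toReal * a)
      = ∑ a ∈ g.range, fun ω => (N ω (g ⁻¹' {a})).toReal * a := by
    funext ω; simp
  have hmem : MemLp (fun ω => ∑ a ∈ g.range, (N ω (g ⁻¹' {a})).toReal * a) 2 P := by
    rw [hZeq]
    exact memLp_finsetSum' (μ := P) (p := 2) g.range
      (f := fun a ω => (N ω (g ⁻¹' {a})).toReal * a) hterm
  -- expectation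
  have hint : ∫ ω, (∑ a ∈ g.range, (N ω (g ⁻¹' {a})).toReal * a) ∂P = ∫ v, g v ∂μ := by
    rw [integral_finset_sum _ (fun a ha => ((hterm a ha).integrable one_le_two))]
    rw [← SimpleFunc.integral_eq_integral g hgi, SimpleFunc.integral_eq]
    refine Finset.sum_congr rfl fun a ha => ?_
    by_cases h0 : a = 0
    · simp [h0]
    · rw [integral_mul_const, (prm_set_moments hN (g.measurableSet_fiber a) (hfin a h0)).2.1,
        smul_eq_mul, measureReal_def]
  -- variance
  have hvar : variance (fun ω => ∑ a ∈ g.range, (N ω (g ⁻¹' {a})).toReal * a) P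
      = ∫ v, (g v)^2 ∂μ := by
    have hps : Set.Pairwise ↑g.range fun a b =>
        IndepFun (fun ω => (N ω (g ⁻¹' {a})).toReal * a)
          (fun ω => (N ω (g ⁻¹' {b})).toReal * b) P := by
      intro a _ b _ hab
      have hd : Pairwise fun i j : Fin 2 =>
          Disjoint (![g ⁻¹' {a}, g ⁻¹' {b}] i) (![g ⁻¹' {a}, g ⁻¹' {b}] j) := by
        intro i j hij
        fin_cases i <;> fin_cases j <;> simp_all <;>
          · refine Set.disjoint_left.mpr fun x hx hx' => hab ?_
            simp only [mem_preimage, mem_singleton_iff] at hx hx'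
            rw [← hx, ← hx']
      have hii := hN.2.2 2 ![g ⁻¹' {a}, g ⁻¹' {b}]
        (fun i => by fin_cases i <;> exact g.measurableSet_fiber _) hd
      have hIF : IndepFun (fun ω => N ω (g ⁻¹' {a})) (fun ω => N ω (g ⁻¹' {b})) P := by
        have := hii.indepFun (i := 0) (j := 1) (by decide)
        simpa using this
      exact hIF.comp (ENNReal.measurable_toReal.mul_const a)
        (ENNReal.measurable_toReal.mul_const b)
    have hsum := IndepFun.variance_sum (μ := P)
      (X := fun a ω => (N ω (g ⁻¹' {a})).toReal * a) (s := g.range) hterm hps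
    rw [hZeq, hsum]
    -- compute ∫ g² via the simple function g.map (·^2)
    have hcoe : ((g.map fun x => x^2) : V → ℝ) = fun v => (g v)^2 := by
      funext v; simp [SimpleFunc.coe_map]
    have hig2 : Integrable ((g.map fun x => x^2) : V → ℝ) μ := by rw [hcoe]; exact hg2
    have hmap : ∫ v, (g v)^2 ∂μ = ∑ a ∈ g.range, (μ (g ⁻¹' {a})).toReal • (a^2) :=
      calc ∫ v, (g v)^2 ∂μ = ∫ v, (g.map fun x => x^2) v ∂μ := by rw [hcoe]
        _ = (g.map fun x => x^2).integral μ := (SimpleFunc.integral_eq_integral _ hig2).symm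
        _ = ∑ a ∈ g.range, (μ (g ⁻¹' {a})).toReal • (a^2) :=
            SimpleFunc.map_integral g _ hgi (by simp)
    rw [hmap]
    refine Finset.sum_congr rfl fun a ha => ?_
    show variance (fun ω => (N ω (g ⁻¹' {a})).toReal * a) P = (μ (g ⁻¹' {a})).toReal • (a^2)
    by_cases h0 : a = 0
    · subst h0
      have : (fun ω : Ω => (N ω (g ⁻¹' {(0:ℝ)})).toReal * 0) = (0 : Ω → ℝ) := by
        funext ω; simp
      rw [this, variance_zero]
      simp
    · have hv := (prm_set_moments hN (g.measurableSet_fiber a) (hfin a h0)).2.2.1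
      have heq : (fun ω => (N ω (g ⁻¹' {a})).toReal * a)
          = fun ω => a * (N ω (g ⁻¹' {a})).toReal := by funext ω; ring
      rw [heq, variance_const_mul, hv, smul_eq_mul]
      ring
  refine ⟨hmem, hint, hvar, ?_⟩
  -- a.e. representation
  have hae : ∀ᵐ ω ∂P, ∀ a ∈ (g.range : Set ℝ), a ≠ 0 → N ω (g ⁻¹' {a}) ≠ ⊤ := by
    rw [ae_ball_iff (g.range : Set ℝ).to_countable]
    intro a _
    by_cases h0 : a = 0
    · simp [h0]
    · filter_upwards [pois_ae_nat (fun ω => N ω (g ⁻¹' {a})) (hN.1 _ (g.measurableSet_fiber a))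
        (μ (g ⁻¹' {a})).toNNReal (hN.2.1 _ (g.measurableSet_fiber a) (hfin a h0))] with ω hω
      intro _
      obtain ⟨k, hk⟩ := hω
      simp [hk]
  filter_upwards [hae] with ω hω
  have hgint : Integrable g (N ω) := by
    rw [SimpleFunc.integrable_iff]
    intro y hy
    by_cases hyr : y ∈ g.range
    · exact lt_top_iff_ne_top.mpr (hω y (by exact_mod_cast hyr) hy)
    · rw [(g.preimage_eq_empty_iff y).mpr hyr]
      simp
  refine ⟨hgint, ?_⟩
  rw [← SimpleFunc.integral_eq_integral g hgint, SimpleFunc.integral_eq]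
  refine Finset.sum_congr rfl fun a _ => by rw [smul_eq_mul, measureReal_def]

end PRM2
section PRM3
open Topology

variable {V : Type*} [MeasurableSpace V] {N : Ω → Measure V} {μ : Measure V}

theorem prm_var_bound [SigmaFinite μ] (hN : IsPoissonRandomMeasure P N μ)
    (f : V → ℝ) (hf : Measurable f) (hf1 : Integrable f μ)
    (hf2 : Integrable (fun v => f v ^ 2) μ) :
    AEMeasurable (fun ω => ∫ v, f v ∂(N ω)) P ∧
    ∫⁻ ω, ENNReal.ofReal ((∫ v, f v ∂(N ω) - ∫ v, f v ∂μ)^2) ∂P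
      ≤ ENNReal.ofReal (∫ v, f v ^ 2 ∂μ) := by
  classical
  set gs : ℕ → SimpleFunc V ℝ :=
    fun n => SimpleFunc.approxOn f hf univ 0 (mem_univ 0) n with hgs
  have hptw : ∀ v, Tendsto (fun n => gs n v) atTop (𝓝 (f v)) := fun v =>
    SimpleFunc.tendsto_approxOn hf (mem_univ 0) (by simp)
  have hbd : ∀ n v, ‖gs n v‖ ≤ 2 * ‖f v‖ := fun n v => by
    have := SimpleFunc.norm_approxOn_zero_le hf (mem_univ 0) v n
    linarith
  have hgi : ∀ n, Integrable (gs n) μ := fun n =>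
    SimpleFunc.integrable_approxOn hf hf1 (mem_univ 0) (integrable_zero _ _ _) n
  have hsqb : ∀ n v, ‖(gs n v)^2‖ ≤ 4 * f v ^ 2 := by
    intro n v
    rw [Real.norm_eq_abs, abs_of_nonneg (sq_nonneg _)]
    have h1 : |gs n v| ≤ 2 * |f v| := by simpa [Real.norm_eq_abs] using hbd n v
    calc (gs n v)^2 = |gs n v|^2 := (sq_abs _).symm
      _ ≤ (2 * |f v|)^2 := by
          apply pow_le_pow_left₀ (abs_nonneg _) h1
      _ = 4 * f v ^ 2 := by rw [mul_pow, sq_abs]; ring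
  have hgi2 : ∀ n, Integrable (fun v => (gs n v)^2) μ := fun n =>
    Integrable.mono' (hf2.const_mul 4) ((gs n).measurable.pow_const 2).aestronglyMeasurable
      (ae_of_all _ fun v => hsqb n v)
  -- the simple approximants of the stochastic integral
  set Z : ℕ → Ω → ℝ :=
    fun n ω => ∑ a ∈ (gs n).range, (N ω ((gs n) ⁻¹' {a})).toReal * a with hZ
  have hZmeas : ∀ n, Measurable (Z n) := fun n =>
    Finset.measurable_sum _ fun a _ =>
      ((hN.1 _ ((gs n).measurableSet_fiber a)).ennreal_toReal).mul_const a
  have hsimple := fun n => prm_simple hN (gs n) (hgi n) (hgi2 n)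
  -- convergence of the deterministic integrals
  have hm_tend : Tendsto (fun n => ∫ v, gs n v ∂μ) atTop (𝓝 (∫ v, f v ∂μ)) := by
    refine tendsto_integral_of_dominated_convergence (fun v => 2 * ‖f v‖)
      (fun n => (gs n).measurable.aestronglyMeasurable) (hf1.norm.const_mul 2)
      (fun n => ae_of_all _ fun v => hbd n v) (ae_of_all _ fun v => hptw v)
  have hm2_tend : Tendsto (fun n => ∫ v, (gs n v)^2 ∂μ) atTop (𝓝 (∫ v, f v ^ 2 ∂μ)) := by
    refine tendsto_integral_of_dominated_convergence (fun v => 4 * (f v)^2)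
      (fun n => ((gs n).measurable.pow_const 2).aestronglyMeasurable)
      (hf2.const_mul 4) (fun n => ae_of_all _ fun v => hsqb n v)
      (ae_of_all _ fun v => (hptw v).pow 2)
  -- a.e. integrability of f w.r.t. N ω
  have hflt : ∀ᵐ ω ∂P, ∫⁻ v, (‖f v‖₊ : ℝ≥0∞) ∂(N ω) < ⊤ := by
    have hcamp := prm_campbell_lintegral hN (g := fun v => (‖f v‖₊ : ℝ≥0∞))
      hf.nnnorm.coe_nnreal_ennreal
    refine ae_lt_top ?_ ?_
    · exact (Measure.measurable_lintegral hf.nnnorm.coe_nnreal_ennreal).comp (prm_measurable hN)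
    · rw [hcamp]
      exact hf1.2.ne
  have hfint : ∀ᵐ ω ∂P, Integrable f (N ω) := by
    filter_upwards [hflt] with ω hω
    exact ⟨hf.aestronglyMeasurable, hω⟩
  have hZrep : ∀ᵐ ω ∂P, ∀ n, Integrable (gs n) (N ω) ∧ Z n ω = ∫ v, gs n v ∂(N ω) := by
    rw [ae_all_iff]
    exact fun n => (hsimple n).2.2.2
  -- a.e. convergence of the stochastic integrals
  have hYtend : ∀ᵐ ω ∂P,
      Tendsto (fun n => Z n ω) atTop (𝓝 (∫ v, f v ∂(N ω))) := by
    filter_upwards [hfint, hZrep] with ω hωf hωZ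
    have : Tendsto (fun n => ∫ v, gs n v ∂(N ω)) atTop (𝓝 (∫ v, f v ∂(N ω))) := by
      refine tendsto_integral_of_dominated_convergence (fun v => 2 * ‖f v‖)
        (fun n => (gs n).measurable.aestronglyMeasurable) (hωf.norm.const_mul 2)
        (fun n => ae_of_all _ fun v => hbd n v) (ae_of_all _ fun v => hptw v)
    refine this.congr fun n => ((hωZ n).2).symm
  have hYmeas : AEMeasurable (fun ω => ∫ v, f v ∂(N ω)) P :=
    aemeasurable_of_tendsto_metrizable_ae atTop (fun n => (hZmeas n).aemeasurable) hYtend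
  refine ⟨hYmeas, ?_⟩
  -- Fatou argument
  set m : ℕ → ℝ := fun n => ∫ v, gs n v ∂μ with hm
  have hvar : ∀ n, ∫ ω, (Z n ω - m n)^2 ∂P = ∫ v, (gs n v)^2 ∂μ := by
    intro n
    have hmem := (hsimple n).1
    have hEZ := (hsimple n).2.1
    have h := variance_eq_integral hmem.aemeasurable
    rw [(hsimple n).2.2.1] at h
    rw [h]
    refine integral_congr_ae (ae_of_all _ fun ω => ?_)
    simp only [Pi.pow_apply, Pi.sub_apply]
    rw [hEZ]
  have hsqint : ∀ n, Integrable (fun ω => (Z n ω - m n)^2) P := by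
    intro n
    have hmem := ((hsimple n).1).sub (memLp_const (m n))
    exact (memLp_two_iff_integrable_sq
      (((hZmeas n).aestronglyMeasurable).sub aestronglyMeasurable_const)).mp hmem
  have hlin : ∀ n, ∫⁻ ω, ENNReal.ofReal ((Z n ω - m n)^2) ∂P
      = ENNReal.ofReal (∫ v, (gs n v)^2 ∂μ) := by
    intro n
    rw [← ofReal_integral_eq_lintegral_ofReal (hsqint n) (ae_of_all _ fun ω => sq_nonneg _),
      hvar n]
  calc ∫⁻ ω, ENNReal.ofReal ((∫ v, f v ∂(N ω) - ∫ v, f v ∂μ)^2) ∂P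
      ≤ liminf (fun n => ∫⁻ ω, ENNReal.ofReal ((Z n ω - m n)^2) ∂P) atTop := by
        rw [show ∫⁻ ω, ENNReal.ofReal ((∫ v, f v ∂(N ω) - ∫ v, f v ∂μ)^2) ∂P
            = ∫⁻ ω, liminf (fun n => ENNReal.ofReal ((Z n ω - m n)^2)) atTop ∂P from
          lintegral_congr_ae (by
            filter_upwards [hYtend] with ω hω
            have ht : Tendsto (fun n => ENNReal.ofReal ((Z n ω - m n)^2)) atTop
                (𝓝 (ENNReal.ofReal ((∫ v, f v ∂(N ω) - ∫ v, f v ∂μ)^2))) := by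
              exact (ENNReal.continuous_ofReal.tendsto _).comp (((hω.sub hm_tend).pow 2))
            exact ht.liminf_eq.symm)]
        exact lintegral_liminf_le fun n =>
          ((((hZmeas n).sub_const (m n)).pow_const 2)).ennreal_ofReal
    _ = ENNReal.ofReal (∫ v, f v ^ 2 ∂μ) := by
        have : Tendsto (fun n => ∫⁻ ω, ENNReal.ofReal ((Z n ω - m n)^2) ∂P) atTop
            (𝓝 (ENNReal.ofReal (∫ v, f v ^ 2 ∂μ))) := by
          simp only [hlin]
          exact (ENNReal.continuous_ofReal.tendsto _).comp hm2_tend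
        exact this.liminf_eq

end PRM3
section Levy

variable {T : ℝ} {D : Set ℝ} {η : Measure ℝ} {s : ℝ → ℝ}

lemma levy_sigmaFinite [SigmaFinite η] : SigmaFinite (levyMeanMeasure T D η s) := by
  unfold levyMeanMeasure
  infer_instance

lemma levy_transfer [SigmaFinite η] (hT : 0 < T) (hD : MeasurableSet D)
    (hs_meas : Measurable s) (hs_nonneg : ∀ x ∈ D, 0 ≤ s x)
    (g : ℝ → ℝ) (hg : Measurable g) (hgi : IntegrableOn (fun x => g x * s x) D η) :
    Integrable ((Icc 0 T ×ˢ D).indicator fun p => g p.2) (levyMeanMeasure T D η s) ∧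
    ∫ p, (Icc 0 T ×ˢ D).indicator (fun p : ℝ × ℝ => g p.2) p ∂(levyMeanMeasure T D η s)
      = T * ∫ x in D, g x * s x ∂η := by
  set ν : Measure ℝ := (η.restrict D).withDensity fun x => ENNReal.ofReal (s x) with hν
  have hνD : ν = (η.restrict D).withDensity fun x => ((s x).toNNReal : ℝ≥0∞) := rfl
  have haeeq : (fun x => (s x).toNNReal • g x) =ᵐ[η.restrict D] fun x => g x * s x := by
    filter_upwards [ae_restrict_mem hD] with x hx
    rw [NNReal.smul_def, Real.coe_toNNReal _ (hs_nonneg x hx), smul_eq_mul, mul_comm]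
  have hint_ν : Integrable g ν := by
    rw [hνD, integrable_withDensity_iff_integrable_smul hs_meas.real_toNNReal]
    exact hgi.congr haeeq.symm
  have hval_ν : ∫ x, g x ∂ν = ∫ x in D, g x * s x ∂η := by
    rw [hνD, integral_withDensity_eq_integral_smul hs_meas.real_toNNReal]
    exact integral_congr_ae haeeq
  have hmap : (levyMeanMeasure T D η s).map Prod.snd
      = ((volume.restrict (Icc 0 T)) univ) • ν := Measure.map_snd_prod
  have hvolT : (volume.restrict (Icc 0 T)) univ = ENNReal.ofReal T := by
    rw [Measure.restrict_apply_univ, Real.volume_Icc, sub_zero]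
  have hsnd_int : Integrable (fun p : ℝ × ℝ => g p.2) (levyMeanMeasure T D η s) := by
    have h1 : Integrable g ((levyMeanMeasure T D η s).map Prod.snd) := by
      rw [hmap, hvolT]
      refine (integrable_smul_measure (by simp [ENNReal.ofReal_eq_zero, not_le, hT]) ENNReal.ofReal_ne_top).mpr hint_ν
    exact (integrable_map_measure hg.aestronglyMeasurable
      measurable_snd.aemeasurable).mp h1
  have hsnd_val : ∫ p : ℝ × ℝ, g p.2 ∂(levyMeanMeasure T D η s)
      = T * ∫ x in D, g x * s x ∂η := by
    have h1 : ∫ p : ℝ × ℝ, g p.2 ∂(levyMeanMeasure T D η s)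
        = ∫ x, g x ∂((levyMeanMeasure T D η s).map Prod.snd) :=
      (integral_map measurable_snd.aemeasurable hg.aestronglyMeasurable).symm
    rw [h1, hmap, hvolT, integral_smul_measure, hval_ν, smul_eq_mul,
      ENNReal.toReal_ofReal hT.le]
  have hae_mem : ∀ᵐ p ∂(levyMeanMeasure T D η s), p ∈ Icc 0 T ×ˢ D := by
    have hnull : levyMeanMeasure T D η s (Icc 0 T ×ˢ D)ᶜ = 0 := by
      have hsub : (Icc 0 T ×ˢ D)ᶜ ⊆ ((Icc (0:ℝ) T)ᶜ ×ˢ (univ : Set ℝ)) ∪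
          ((univ : Set ℝ) ×ˢ Dᶜ) := by
        intro p hp
        simp only [mem_compl_iff, mem_prod, not_and_or] at hp
        rcases hp with h | h
        · exact Or.inl ⟨h, mem_univ _⟩
        · exact Or.inr ⟨mem_univ _, h⟩
      refine measure_mono_null hsub (measure_union_null ?_ ?_)
      · show (volume.restrict (Icc 0 T)).prod ν _ = 0
        rw [Measure.prod_prod, Measure.restrict_apply (measurableSet_Icc.compl),
          compl_inter_self, measure_empty, zero_mul]
      · show (volume.restrict (Icc 0 T)).prod ν _ = 0
        rw [Measure.prod_prod]
        have : ν Dᶜ = 0 := by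
          rw [hν, withDensity_apply _ hD.compl, Measure.restrict_restrict hD.compl,
            compl_inter_self]
          simp
        rw [this, mul_zero]
    have := measure_eq_zero_iff_ae_notMem.mp hnull
    filter_upwards [this] with p hp
    exact not_not.mp hp
  have hind : (Icc 0 T ×ˢ D).indicator (fun p : ℝ × ℝ => g p.2)
      =ᵐ[levyMeanMeasure T D η s] fun p : ℝ × ℝ => g p.2 := by
    filter_upwards [hae_mem] with p hp
    exact indicator_of_mem hp _
  exact ⟨hsnd_int.congr hind.symm, by rw [integral_congr_ae hind, hsnd_val]⟩

end Levy

end Auxiliary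

/-- Risk decomposition `E[‖s − ŝ‖²_η] = ‖s − s^⊥‖²_η + E[χ²]`, together with the
variance bound `E[χ²] ≤ ‖s‖_∞ · d / T`, where `‖s‖_∞` is the `η`-essential supremum
of `s` on `D`. -/
theorem projection_estimator_risk_decomposition
    {Ω : Type*} [MeasurableSpace Ω] (P : Measure Ω) [IsProbabilityMeasure P]
    (T : ℝ) (hT : 0 < T)
    (D : Set ℝ) (hD : MeasurableSet D) (hD0 : (0 : ℝ) ∉ D)
    (η : Measure ℝ) [SigmaFinite η]
    (s : ℝ → ℝ) (hs_meas : Measurable s) (hs_pos : ∀ x ∈ D, 0 < s x)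
    (hs_bdd : ∃ M : ℝ, ∀ x ∈ D, s x ≤ M)
    (hs_sq : IntegrableOn (fun x => s x ^ 2) D η)
    (J : Ω → Measure (ℝ × ℝ))
    (hJ : IsPoissonRandomMeasure P J (levyMeanMeasure T D η s))
    (d : ℕ) (φ : Fin d → ℝ → ℝ)
    (hφ_meas : ∀ i, Measurable (φ i))
    (hφ_on : ∀ i j, ∫ x in D, φ i x * φ j x ∂η = if i = j then 1 else 0)
    (βhat : Fin d → Ω → ℝ)
    (hβhat : ∀ i ω, βhat i ω = (1 / T) * ∫ p in Icc 0 T ×ˢ D, φ i p.2 ∂(J ω))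
    (shat : Ω → ℝ → ℝ)
    (hshat : ∀ ω x, shat ω x = ∑ i, βhat i ω * φ i x)
    (sperp : ℝ → ℝ)
    (hsperp : ∀ x, sperp x = ∑ i, (∫ y in D, φ i y * s y ∂η) * φ i x)
    (χsq : Ω → ℝ)
    (hχ : ∀ ω, χsq ω = ∫ x in D, (shat ω x - sperp x) ^ 2 ∂η) :
    (∫ ω, (∫ x in D, (s x - shat ω x) ^ 2 ∂η) ∂P
        = (∫ x in D, (s x - sperp x) ^ 2 ∂η) + ∫ ω, χsq ω ∂P) ∧
      ∫ ω, χsq ω ∂P ≤ essSup s (η.restrict D) * d / T := by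
  classical
  obtain ⟨M₀, hM₀⟩ := hs_bdd
  have hs_nonneg : ∀ x ∈ D, 0 ≤ s x := fun x hx => (hs_pos x hx).le
  set b : Fin d → ℝ := fun i => ∫ y in D, φ i y * s y ∂η with hb
  haveI : SigmaFinite (levyMeanMeasure T D η s) := levy_sigmaFinite
  -- basic integrability on D
  have hφii : ∀ i, IntegrableOn (fun x => φ i x * φ i x) D η := by
    intro i
    by_contra hcon
    have h1 := hφ_on i i
    rw [if_pos rfl, integral_undef hcon] at h1
    exact one_ne_zero h1.symm
  have hφsq : ∀ i, IntegrableOn (fun x => (φ i x)^2) D η := by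
    intro i
    have := hφii i
    simpa [pow_two] using this
  have hφij : ∀ i j, IntegrableOn (fun x => φ i x * φ j x) D η := by
    intro i j
    refine Integrable.mono' ((hφsq i).add (hφsq j))
      (((hφ_meas i).mul (hφ_meas j)).aestronglyMeasurable) (ae_of_all _ fun x => ?_)
    simp only [Pi.add_apply]
    rw [Real.norm_eq_abs, abs_mul]
    nlinarith [sq_nonneg (|φ i x| - |φ j x|), sq_abs (φ i x), sq_abs (φ j x),
      abs_nonneg (φ i x), abs_nonneg (φ j x)]
  have hφs : ∀ i, IntegrableOn (fun x => φ i x * s x) D η := by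
    intro i
    refine Integrable.mono' ((hφsq i).add hs_sq)
      (((hφ_meas i).mul hs_meas).aestronglyMeasurable) (ae_of_all _ fun x => ?_)
    simp only [Pi.add_apply]
    rw [Real.norm_eq_abs, abs_mul]
    nlinarith [sq_nonneg (|φ i x| - |s x|), sq_abs (φ i x), sq_abs (s x),
      abs_nonneg (φ i x), abs_nonneg (s x)]
  have hφ2s : ∀ i, IntegrableOn (fun x => (φ i x)^2 * s x) D η := by
    intro i
    refine Integrable.mono' ((hφsq i).const_mul (max M₀ 0))
      (((hφ_meas i).pow_const 2).mul hs_meas).aestronglyMeasurable ?_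
    filter_upwards [ae_restrict_mem hD] with x hx
    rw [Real.norm_eq_abs, abs_mul, abs_of_nonneg (sq_nonneg _),
      abs_of_nonneg (hs_nonneg x hx)]
    have h1 : s x ≤ max M₀ 0 := le_max_of_le_left (hM₀ x hx)
    nlinarith [sq_nonneg (φ i x)]
  have hφnorm : ∀ i, ∫ x in D, (φ i x)^2 ∂η = 1 := by
    intro i
    have h1 := hφ_on i i
    rw [if_pos rfl] at h1
    rw [show (fun x => (φ i x)^2) = fun x => φ i x * φ i x from funext fun x => by ring]
    exact h1
  -- deterministic expansions
  have hgsq_eq : ∀ c : Fin d → ℝ, (fun x => (∑ i, c i * φ i x)^2)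
      = fun x => ∑ i, ∑ j, (c i * c j) * (φ i x * φ j x) := by
    intro c
    funext x
    rw [pow_two, Finset.sum_mul_sum]
    exact Finset.sum_congr rfl fun i _ => Finset.sum_congr rfl fun j _ => by ring
  have hg2int : ∀ c : Fin d → ℝ, IntegrableOn (fun x => (∑ i, c i * φ i x)^2) D η := by
    intro c
    rw [hgsq_eq]
    exact integrable_finset_sum _ fun i _ =>
      integrable_finset_sum _ fun j _ => ((hφij i j).const_mul _)
  have hEg : ∀ c : Fin d → ℝ, ∫ x in D, (∑ i, c i * φ i x)^2 ∂η = ∑ i, (c i)^2 := by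
    intro c
    rw [hgsq_eq]
    rw [integral_finset_sum _ fun i _ =>
      integrable_finset_sum _ fun j _ => ((hφij i j).const_mul _)]
    have : ∀ i : Fin d, ∫ x in D, (∑ j, (c i * c j) * (φ i x * φ j x)) ∂η = (c i)^2 := by
      intro i
      rw [integral_finset_sum _ fun j _ => ((hφij i j).const_mul _)]
      have : ∀ j : Fin d, ∫ x in D, (c i * c j) * (φ i x * φ j x) ∂η
          = (c i * c j) * (if i = j then (1:ℝ) else 0) := by
        intro j
        rw [integral_const_mul, hφ_on i j]
      simp only [this]
      simp [Finset.sum_ite_eq, pow_two]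
    simp only [this]
  have hsgint : ∀ c : Fin d → ℝ,
      IntegrableOn (fun x => s x * (∑ i, c i * φ i x)) D η := by
    intro c
    have heq : (fun x => s x * (∑ i, c i * φ i x))
        = fun x => ∑ i, c i * (φ i x * s x) := by
      funext x
      rw [Finset.mul_sum]
      exact Finset.sum_congr rfl fun i _ => by ring
    rw [heq]
    exact integrable_finset_sum _ fun i _ => ((hφs i).const_mul _)
  have hEsg : ∀ c : Fin d → ℝ, ∫ x in D, s x * (∑ i, c i * φ i x) ∂η
      = ∑ i, c i * b i := by
    intro c
    have heq : (fun x => s x * (∑ i, c i * φ i x))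
        = fun x => ∑ i, c i * (φ i x * s x) := by
      funext x
      rw [Finset.mul_sum]
      exact Finset.sum_congr rfl fun i _ => by ring
    rw [heq, integral_finset_sum _ fun i _ => ((hφs i).const_mul _)]
    exact Finset.sum_congr rfl fun i _ => by rw [integral_const_mul]
  have hE1 : ∀ c : Fin d → ℝ, ∫ x in D, (s x - ∑ i, c i * φ i x)^2 ∂η
      = ∫ x in D, (s x)^2 ∂η - 2*(∑ i, c i * b i) + ∑ i, (c i)^2 := by
    intro c
    have heq : (fun x => (s x - ∑ i, c i * φ i x)^2)
        = fun x => ((s x)^2 - 2*(s x * (∑ i, c i * φ i x)))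
            + (∑ i, c i * φ i x)^2 := by
      funext x
      ring
    have hmul : IntegrableOn (fun x => 2*(s x * ∑ i, c i * φ i x)) D η :=
      (hsgint c).const_mul 2
    have hf : IntegrableOn (fun x => s x ^ 2 - 2*(s x * ∑ i, c i * φ i x)) D η :=
      hs_sq.sub hmul
    rw [heq, integral_add hf (hg2int c), integral_sub hs_sq hmul,
      integral_const_mul, hEsg c, hEg c]
  -- probabilistic input for each coordinate
  set Mess : ℝ := essSup s (η.restrict D) with hMess
  have hbddunder : Filter.IsBoundedUnder (· ≤ ·) (ae (η.restrict D)) s := by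
    refine ⟨M₀, ?_⟩
    rw [Filter.eventually_map]
    filter_upwards [ae_restrict_mem hD] with x hx
    exact hM₀ x hx
  have hsleM : s ≤ᵐ[η.restrict D] fun _ => Mess := ae_le_essSup hbddunder
  have hφ2s_le : ∀ i, ∫ x in D, (φ i x)^2 * s x ∂η ≤ Mess := by
    intro i
    have h1 : ∫ x in D, (φ i x)^2 * s x ∂η ≤ ∫ x in D, Mess * (φ i x)^2 ∂η := by
      refine integral_mono_ae (hφ2s i) ((hφsq i).const_mul Mess) ?_
      filter_upwards [hsleM] with x hx
      nlinarith [sq_nonneg (φ i x)]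
    rw [integral_const_mul, hφnorm i, mul_one] at h1
    exact h1
  have key : ∀ i : Fin d, AEMeasurable (βhat i) P ∧
      ∫⁻ ω, ENNReal.ofReal ((βhat i ω - b i)^2) ∂P
        ≤ ENNReal.ofReal ((∫ x in D, (φ i x)^2 * s x ∂η) / T) := by
    intro i
    have htrans1 := levy_transfer (η := η) (s := s) hT hD hs_meas hs_nonneg (φ i)
      (hφ_meas i) (hφs i)
    have htrans2 := levy_transfer (η := η) (s := s) hT hD hs_meas hs_nonneg
      (fun x => (φ i x)^2) ((hφ_meas i).pow_const 2) (hφ2s i)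
    set fi : ℝ × ℝ → ℝ := (Icc 0 T ×ˢ D).indicator fun p => φ i p.2 with hfi
    have hfimeas : Measurable fi :=
      (((hφ_meas i).comp measurable_snd)).indicator (measurableSet_Icc.prod hD)
    have hfisq : (fun p => fi p ^ 2)
        = (Icc 0 T ×ˢ D).indicator fun p : ℝ × ℝ => (φ i p.2)^2 := by
      funext p
      by_cases hp : p ∈ Icc 0 T ×ˢ D <;> simp [hfi, indicator_apply, hp]
    have hf2 : Integrable (fun p => fi p ^ 2) (levyMeanMeasure T D η s) := by
      rw [hfisq]; exact htrans2.1
    have hmain := prm_var_bound (P := P) hJ fi hfimeas htrans1.1 hf2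
    have hYrel : ∀ ω, ∫ p, fi p ∂(J ω) = ∫ p in Icc 0 T ×ˢ D, φ i p.2 ∂(J ω) :=
      fun ω => integral_indicator (measurableSet_Icc.prod hD)
    have hβrel : ∀ ω, βhat i ω = (1/T) * ∫ p, fi p ∂(J ω) := by
      intro ω
      rw [hβhat i ω, hYrel ω]
    constructor
    · have : AEMeasurable (fun ω => (1/T) * ∫ p, fi p ∂(J ω)) P :=
        (hmain.1.const_mul _)
      exact this.congr (ae_of_all _ fun ω => (hβrel ω).symm)
    · have hval1 : ∫ p, fi p ∂(levyMeanMeasure T D η s) = T * b i := htrans1.2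
      have hval2 : ∫ p, fi p ^ 2 ∂(levyMeanMeasure T D η s)
          = T * ∫ x in D, (φ i x)^2 * s x ∂η := by
        rw [hfisq]; exact htrans2.2
      have hbd2 := hmain.2
      rw [hval1, hval2] at hbd2
      have hrw : (fun ω => ENNReal.ofReal ((βhat i ω - b i)^2))
          = fun ω => ENNReal.ofReal (1/T^2)
              * ENNReal.ofReal ((∫ p, fi p ∂(J ω) - T * b i)^2) := by
        funext ω
        rw [← ENNReal.ofReal_mul (by positivity), hβrel ω]
        congr 1
        field_simp
      rw [hrw, lintegral_const_mul' _ _ ENNReal.ofReal_ne_top]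
      calc ENNReal.ofReal (1/T^2)
            * ∫⁻ ω, ENNReal.ofReal ((∫ p, fi p ∂(J ω) - T * b i)^2) ∂P
          ≤ ENNReal.ofReal (1/T^2)
            * ENNReal.ofReal (T * ∫ x in D, (φ i x)^2 * s x ∂η) :=
            mul_le_mul_right hbd2 _
        _ = ENNReal.ofReal ((∫ x in D, (φ i x)^2 * s x ∂η) / T) := by
            rw [← ENNReal.ofReal_mul (by positivity)]
            congr 1
            field_simp
  -- χ² as a sum of squares
  have hχsum : ∀ ω, χsq ω = ∑ i, (βhat i ω - b i)^2 := by
    intro ω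
    rw [hχ ω]
    have heq : (fun x => (shat ω x - sperp x)^2)
        = fun x => (∑ i, (βhat i ω - b i) * φ i x)^2 := by
      funext x
      rw [hshat ω x, hsperp x, ← Finset.sum_sub_distrib]
      congr 1
      exact Finset.sum_congr rfl fun i _ => by rw [sub_mul]
    rw [heq, hEg fun i => βhat i ω - b i]
  -- pointwise Pythagoras
  have hpt : ∀ ω, ∫ x in D, (s x - shat ω x)^2 ∂η
      = (∫ x in D, (s x - sperp x)^2 ∂η) + χsq ω := by
    intro ω
    have h1 : ∫ x in D, (s x - shat ω x)^2 ∂η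
        = ∫ x in D, (s x)^2 ∂η - 2*(∑ i, βhat i ω * b i) + ∑ i, (βhat i ω)^2 := by
      rw [show (fun x => (s x - shat ω x)^2)
          = fun x => (s x - ∑ i, βhat i ω * φ i x)^2 from
        funext fun x => by rw [hshat ω x]]
      exact hE1 fun i => βhat i ω
    have h2 : ∫ x in D, (s x - sperp x)^2 ∂η
        = ∫ x in D, (s x)^2 ∂η - 2*(∑ i, b i * b i) + ∑ i, (b i)^2 := by
      rw [show (fun x => (s x - sperp x)^2)
          = fun x => (s x - ∑ i, b i * φ i x)^2 from
        funext fun x => by rw [hsperp x]]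
      exact hE1 b
    rw [h1, h2, hχsum ω]
    have e1 : ∑ i, (βhat i ω - b i)^2
        = ∑ i, ((βhat i ω)^2 - 2*(βhat i ω * b i) + (b i)^2) :=
      Finset.sum_congr rfl fun i _ => by ring
    rw [e1, Finset.sum_add_distrib, Finset.sum_sub_distrib, ← Finset.mul_sum]
    have e2 : ∑ i, b i * b i = ∑ i, (b i)^2 :=
      Finset.sum_congr rfl fun i _ => by ring
    rw [e2]
    ring
  -- χ² is nonnegative and integrable, with the right bound
  have hχnonneg : ∀ ω, 0 ≤ χsq ω := fun ω => by
    rw [hχsum ω]; exact Finset.sum_nonneg fun i _ => sq_nonneg _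
  have hχaem : AEMeasurable χsq P := by
    have : AEMeasurable (fun ω => ∑ i, (βhat i ω - b i)^2) P :=
      Finset.aemeasurable_fun_sum _ fun i _ => (((key i).1.sub_const _).pow_const 2)
    exact this.congr (ae_of_all _ fun ω => (hχsum ω).symm)
  have hMess0 : 0 < d → 0 ≤ Mess := by
    intro hd
    by_contra hM
    push_neg at hM
    have hfalse : ∀ᵐ x ∂(η.restrict D), False := by
      filter_upwards [hsleM, ae_restrict_mem hD] with x h1 h2
      exact absurd (lt_of_lt_of_le (hs_pos x h2) h1) (not_lt.mpr hM.le)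
    have h0 : η.restrict D = 0 := by
      apply Measure.measure_univ_eq_zero.mp
      rw [ae_iff] at hfalse
      simpa using hfalse
    have h1 := hφnorm ⟨0, hd⟩
    rw [show ∫ x in D, (φ ⟨0, hd⟩ x)^2 ∂η = ∫ x, (φ ⟨0, hd⟩ x)^2 ∂(η.restrict D) from rfl,
      h0, integral_zero_measure] at h1
    exact one_ne_zero h1.symm
  have hMdT : 0 ≤ Mess * d / T := by
    rcases Nat.eq_zero_or_pos d with hd | hd
    · subst hd; simp
    · have := hMess0 hd
      positivity
  have hχbound : ∫⁻ ω, ENNReal.ofReal (χsq ω) ∂P ≤ ENNReal.ofReal (Mess * d / T) := by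
    rcases Nat.eq_zero_or_pos d with hd | hd
    · subst hd
      have hz : ∀ ω, χsq ω = 0 := fun ω => by rw [hχsum ω]; simp
      simp [hz]
    · have hstep1 : (fun ω => ENNReal.ofReal (χsq ω))
          = fun ω => ∑ i, ENNReal.ofReal ((βhat i ω - b i)^2) := by
        funext ω
        rw [hχsum ω, ENNReal.ofReal_sum_of_nonneg (fun i _ => sq_nonneg _)]
      rw [hstep1, lintegral_finset_sum' _ fun i _ =>
        ((((key i).1.sub_const _)).pow_const 2).ennreal_ofReal]
      calc ∑ i, ∫⁻ ω, ENNReal.ofReal ((βhat i ω - b i)^2) ∂P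
          ≤ ∑ _i : Fin d, ENNReal.ofReal (Mess / T) := by
            refine Finset.sum_le_sum fun i _ => le_trans (key i).2 ?_
            apply ENNReal.ofReal_le_ofReal
            gcongr
            exact hφ2s_le i
        _ = ENNReal.ofReal (Mess * d / T) := by
            rw [Finset.sum_const, Finset.card_univ, Fintype.card_fin, nsmul_eq_mul]
            rw [show ((d:ℝ≥0∞)) = ENNReal.ofReal (d:ℝ) by
              rw [ENNReal.ofReal_natCast]]
            rw [← ENNReal.ofReal_mul (by positivity)]
            congr 1
            field_simp
  have hχint : Integrable χsq P :=
    ⟨hχaem.aestronglyMeasurable, (hasFiniteIntegral_iff_ofReal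
      (ae_of_all _ hχnonneg)).mpr (lt_of_le_of_lt hχbound ENNReal.ofReal_lt_top)⟩
  constructor
  · rw [integral_congr_ae (ae_of_all _ hpt), integral_add (integrable_const _) hχint,
      integral_const, probReal_univ]
    simp
  · have hrepr : ∫ ω, χsq ω ∂P = (∫⁻ ω, ENNReal.ofReal (χsq ω) ∂P).toReal := by
      rw [integral_eq_lintegral_of_nonneg_ae (ae_of_all _ hχnonneg)
        hχaem.aestronglyMeasurable]
    rw [hrepr]
    calc (∫⁻ ω, ENNReal.ofReal (χsq ω) ∂P).toReal
        ≤ (ENNReal.ofReal (Mess * d / T)).toReal :=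
          ENNReal.toReal_mono ENNReal.ofReal_ne_top hχbound
      _ = Mess * d / T := ENNReal.toReal_ofReal hMdT
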